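/- arXiv:1911.02368 — 5 statements merged into one kernel-verified Lean document; each statement's English description precedes it below -/
import Mathlib

section
/- Let A be a finite-dimensional central simple algebra over a field k, and let n = dim_k A. Then A ⊗_k A^op is isomorphic as a k-algebra to the matrix algebra M_n(k). -/
open TensorProduct Finset Pointwise

/-- Artin–Whaples style independence lemma for central simple algebras. -/
theorem csa_indep_aux (k : Type*) [Field k] (A : Type*) [Ring A] [Algebra k A]
    [Algebra.IsCentral k A] [IsSimpleRing A] :
    ∀ (n : ℕ) (a b : Fin n → A), LinearIndependent k b →
      (∀ x : A, ∑ j, a j * x * b j = 0) → ∀ j, a j = 0 := by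
  intro n
  induction n with
  | zero => intro a b _ _ j; exact j.elim0
  | succ n ih =>
    intro a b hb hrel
    by_contra hcon
    push_neg at hcon
    obtain ⟨j0, hj0⟩ := hcon
    set e : Equiv.Perm (Fin (n+1)) := Equiv.swap 0 j0 with he
    set a' : Fin (n+1) → A := a ∘ e with ha'
    set b' : Fin (n+1) → A := b ∘ e with hb'def
    have hb' : LinearIndependent k b' := hb.comp e e.injective
    have hrel' : ∀ x : A, ∑ j, a' j * x * b' j = 0 := fun x => by
      rw [← hrel x]
      exact Equiv.sum_comp e fun j => a j * x * b j
    have ha0 : a' 0 ≠ 0 := by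
      simpa [ha', he, Equiv.swap_apply_left] using hj0
    -- Express 1 as a k-combination of elements u * a' 0 * v
    have h1mem : (1 : A) ∈ TwoSidedIdeal.span {a' 0} :=
      IsSimpleRing.one_mem_of_ne_zero_mem _ ha0 (TwoSidedIdeal.subset_span rfl)
    rw [TwoSidedIdeal.mem_span_iff_mem_addSubgroup_closure] at h1mem
    have h1mem' : (1 : A) ∈ Submodule.span k ((Set.univ : Set A) * {a' 0} * (Set.univ : Set A)) := by
      have := (AddSubgroup.closure_le
          ((Submodule.span k ((Set.univ : Set A) * {a' 0} * (Set.univ : Set A))).toAddSubgroup)).mpr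
          Submodule.subset_span
      exact this h1mem
    rw [Submodule.mem_span_set'] at h1mem'
    obtain ⟨m, f, g, hfg⟩ := h1mem'
    have hguv : ∀ i, ∃ u v : A, (g i : A) = u * a' 0 * v := by
      intro i
      obtain ⟨p, hp, v, -, hpv⟩ := (g i).2
      obtain ⟨u, -, w2, hw2, hup⟩ := hp
      rw [Set.mem_singleton_iff] at hw2
      exact ⟨u, v, by rw [← hpv, ← hup, hw2]⟩
    choose u v huv using hguv
    set w : Fin (n+1) → A := fun j => ∑ i, (f i • u i) * a' j * v i with hw
    have hw0 : w 0 = 1 := by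
      rw [hw, ← hfg]
      refine Finset.sum_congr rfl fun i _ => ?_
      rw [huv i, smul_mul_assoc, smul_mul_assoc]
    have hwrel : ∀ x : A, ∑ j, w j * x * b' j = 0 := by
      intro x
      calc ∑ j, w j * x * b' j
          = ∑ j, ∑ i, ((f i • u i) * a' j * v i) * x * b' j := by
            refine Finset.sum_congr rfl fun j _ => ?_
            rw [hw, Finset.sum_mul, Finset.sum_mul]
        _ = ∑ i, ∑ j, (f i • u i) * (a' j * (v i * x) * b' j) := by
            rw [Finset.sum_comm]
            exact Finset.sum_congr rfl fun i _ => Finset.sum_congr rfl fun j _ => by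
              simp only [mul_assoc]
        _ = ∑ i, (f i • u i) * ∑ j, a' j * (v i * x) * b' j := by
            exact Finset.sum_congr rfl fun i _ => (Finset.mul_sum _ _ _).symm
        _ = 0 := by
            refine Finset.sum_eq_zero fun i _ => ?_
            rw [hrel' (v i * x), mul_zero]
    -- commutators
    have hcomm : ∀ y : A, ∀ j, y * w j = w j * y := by
      intro y
      have hrel2 : ∀ x : A, ∑ j : Fin n, (y * w j.succ - w j.succ * y) * x * b' j.succ = 0 := by
        intro x
        have h1 : ∑ j : Fin (n+1), (y * w j - w j * y) * x * b' j = 0 := by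
          have : ∀ j : Fin (n+1), (y * w j - w j * y) * x * b' j
              = y * (w j * x * b' j) - w j * (y * x) * b' j := fun j => by
            rw [sub_mul, sub_mul]; simp [mul_assoc]
          rw [Finset.sum_congr rfl fun j _ => this j, Finset.sum_sub_distrib,
            ← Finset.mul_sum, hwrel x, hwrel (y * x), mul_zero, sub_zero]
        rw [Fin.sum_univ_succ] at h1
        rw [hw0] at h1
        simpa using h1
      have := ih (fun j => y * w j.succ - w j.succ * y) (fun j => b' j.succ)
        (hb'.comp Fin.succ (Fin.succ_injective n)) hrel2
      intro j
      rcases Fin.eq_zero_or_eq_succ j with rfl | ⟨j', rfl⟩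
      · rw [hw0, one_mul, mul_one]
      · have hj := this j'
        have := sub_eq_zero.mp hj
        exact this
    -- every w j is central, hence a scalar
    have hscal : ∀ j, ∃ lam : k, w j = algebraMap k A lam := by
      intro j
      have hmem : w j ∈ Subalgebra.center k A :=
        Subalgebra.mem_center_iff.mpr fun y => hcomm y j
      have := Algebra.IsCentral.out (K := k) (D := A) hmem
      rw [Algebra.mem_bot] at this
      obtain ⟨r, hr⟩ := this
      exact ⟨r, hr.symm⟩
    choose lam hlam using hscal
    have hsum : ∑ j, lam j • b' j = 0 := by
      have := hwrel 1
      calc ∑ j, lam j • b' j = ∑ j, w j * 1 * b' j := by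
            refine Finset.sum_congr rfl fun j _ => ?_
            rw [hlam j, mul_one, Algebra.smul_def]
        _ = 0 := hwrel 1
    have hlam0 : ∀ j, lam j = 0 := by
      have := Fintype.linearIndependent_iff.mp hb' lam hsum
      exact this
    have : (1 : A) = 0 := by
      rw [← hw0, hlam 0, hlam0 0, map_zero]
    exact one_ne_zero this

/-- Right multiplication as an algebra hom from the opposite algebra. -/
def rmulHom (k : Type*) [Field k] (A : Type*) [Ring A] [Algebra k A] :
    Aᵐᵒᵖ →ₐ[k] Module.End k A where
  toFun b := LinearMap.mulRight k b.unop
  map_one' := by ext x; simp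
  map_mul' b c := by ext x; simp [mul_assoc]
  map_zero' := by ext x; simp
  map_add' b c := by ext x; simp [mul_add]
  commutes' r := by ext x; simp [Algebra.commutes, MulOpposite.algebraMap_apply,
    Algebra.smul_def, Algebra.commutes r x]

/-- The sandwich map `A ⊗ Aᵐᵒᵖ →ₐ End_k A`. -/
noncomputable def sandwich (k : Type*) [Field k] (A : Type*) [Ring A] [Algebra k A] :
    A ⊗[k] Aᵐᵒᵖ →ₐ[k] Module.End k A :=
  Algebra.TensorProduct.lift (Algebra.lmul k A) (rmulHom k A)
    (fun a b => by
      ext x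
      simp [rmulHom, Module.End.mul_apply, mul_assoc])

theorem sandwich_tmul (k : Type*) [Field k] (A : Type*) [Ring A] [Algebra k A]
    (a : A) (b : Aᵐᵒᵖ) (y : A) : sandwich k A (a ⊗ₜ b) y = a * y * b.unop := by
  simp [sandwich, Algebra.TensorProduct.lift_tmul, rmulHom, Module.End.mul_apply, mul_assoc]

/-- If `A` is a finite-dimensional central simple algebra over a field `k` with
`n = dim_k A`, then `A ⊗[k] Aᵐᵒᵖ ≅ M_n(k)` as `k`-algebras. -/
theorem csa_tensor_op_isomorphic_matrix
    (k : Type*) [Field k] (A : Type*) [Ring A] [Algebra k A]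
    [FiniteDimensional k A] [Algebra.IsCentral k A] [IsSimpleRing A] :
    Nonempty (A ⊗[k] Aᵐᵒᵖ ≃ₐ[k]
      Matrix (Fin (Module.finrank k A)) (Fin (Module.finrank k A)) k) := by
  haveI : FiniteDimensional k Aᵐᵒᵖ :=
    FiniteDimensional.of_surjective
      ((MulOpposite.opLinearEquiv k : A ≃ₗ[k] Aᵐᵒᵖ)).toLinearMap
      (LinearEquiv.surjective _)
  set e := Module.finBasis k Aᵐᵒᵖ with he
  have hrep : ∀ y : A ⊗[k] Aᵐᵒᵖ,
      ∃ c : Fin (Module.finrank k Aᵐᵒᵖ) → A, y = ∑ i, c i ⊗ₜ[k] e i := by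
    intro y
    induction y using TensorProduct.induction_on with
    | zero => exact ⟨0, by simp⟩
    | tmul a b =>
        refine ⟨fun i => e.repr b i • a, ?_⟩
        conv_lhs => rw [← e.sum_repr b]
        rw [tmul_sum]
        refine Finset.sum_congr rfl fun i _ => ?_
        rw [tmul_smul, smul_tmul']
    | add y z hy hz =>
        obtain ⟨cy, hcy⟩ := hy; obtain ⟨cz, hcz⟩ := hz
        exact ⟨cy + cz, by simp [hcy, hcz, add_tmul, Finset.sum_add_distrib]⟩
  have hli : LinearIndependent k fun i => (e i).unop := by
    have h2 := e.linearIndependent.map'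
      ((MulOpposite.opLinearEquiv k : A ≃ₗ[k] Aᵐᵒᵖ)).symm.toLinearMap
      (LinearEquiv.ker _)
    exact h2
  have hinj : Function.Injective (sandwich k A) := by
    rw [injective_iff_map_eq_zero]
    intro x hx
    obtain ⟨c, rfl⟩ := hrep x
    have hall : ∀ y : A, ∑ i, c i * y * (e i).unop = 0 := by
      intro y
      have h3 : sandwich k A (∑ i, c i ⊗ₜ[k] e i) y = 0 := by
        rw [hx]; rfl
      rw [map_sum] at h3
      rw [LinearMap.sum_apply] at h3
      simpa [sandwich_tmul] using h3
    have hzero := csa_indep_aux k A _ c _ hli hall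
    simp only [hzero]
    simp
  let ψ := (algEquivMatrix (Module.finBasis k A)).toAlgHom.comp (sandwich k A)
  have hinjψ : Function.Injective ψ :=
    (algEquivMatrix (Module.finBasis k A)).injective.comp hinj
  have hfr : Module.finrank k (A ⊗[k] Aᵐᵒᵖ)
      = Module.finrank k (Matrix (Fin (Module.finrank k A)) (Fin (Module.finrank k A)) k) := by
    rw [Module.finrank_tensorProduct, Module.finrank_matrix,
      ← (MulOpposite.opLinearEquiv k : A ≃ₗ[k] Aᵐᵒᵖ).finrank_eq]
    simp
  have hsurj : Function.Surjective ψ := by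
    have := (LinearMap.injective_iff_surjective_of_finrank_eq_finrank
      (f := ψ.toLinearMap) hfr).mp hinjψ
    exact this
  exact ⟨AlgEquiv.ofBijective ψ ⟨hinjψ, hsurj⟩⟩
end

section
/- Let D be a finite-dimensional central division algebra over a field k and let L be a maximal subfield of D (a subfield containing k that is not properly contained in any larger subfield of D). Then C_D(L) = L, dim_k D = [L:k]², and D ⊗_k L is isomorphic as an L-algebra to the matrix algebra M_n(L) where n = [L:k]; in particular L is a splitting field of D. -/
open TensorProduct

namespace MaxSubfieldAux




section Aux
variable {k : Type*} [Field k] {D : Type*} [DivisionRing D] [Algebra k D]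

/-- Artin-style independence: if `u i` are `k`-linearly independent and
`∑ d i * x * u i = 0` for all `x`, in a central algebra, then all `d i = 0`. -/
theorem indep_lemma [Algebra.IsCentral k D] {ι : Type*} {u : ι → D}
    (hu : LinearIndependent k u) :
    ∀ (s : Finset ι) (d : ι → D), (∀ x : D, ∑ i ∈ s, d i * x * u i = 0) →
      ∀ i ∈ s, d i = 0 := by
  classical
  intro s
  induction s using Finset.strongInduction with
  | _ s ih =>
    intro d hrel
    by_contra hcon
    push_neg at hcon
    obtain ⟨j, hjs, hj⟩ := hcon
    set d' : ι → D := fun i => (d j)⁻¹ * d i with hd'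
    have hdj : d' j = 1 := inv_mul_cancel₀ hj
    have hrel' : ∀ x : D, ∑ i ∈ s, d' i * x * u i = 0 := by
      intro x
      have : ∑ i ∈ s, d' i * x * u i = (d j)⁻¹ * ∑ i ∈ s, d i * x * u i := by
        rw [Finset.mul_sum]
        exact Finset.sum_congr rfl fun i _ => by simp [hd', mul_assoc]
      rw [this, hrel x, mul_zero]
    have hcomm : ∀ i ∈ s.erase j, ∀ y : D, d' i * y = y * d' i := by
      intro i hi y
      have hrel2 : ∀ x : D, ∑ i ∈ s.erase j, (d' i * y - y * d' i) * x * u i = 0 := by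
        intro x
        have h1 := hrel' (y * x)
        have h2 : y * ∑ i ∈ s, d' i * x * u i = 0 := by rw [hrel' x, mul_zero]
        rw [Finset.mul_sum] at h2
        have h3 : ∑ i ∈ s, (d' i * y - y * d' i) * x * u i = 0 := by
          have : ∑ i ∈ s, (d' i * y - y * d' i) * x * u i
              = ∑ i ∈ s, d' i * (y * x) * u i - ∑ i ∈ s, y * (d' i * x * u i) := by
            rw [← Finset.sum_sub_distrib]
            exact Finset.sum_congr rfl fun i _ => by noncomm_ring
          rw [this, h1, h2, sub_zero]
        rw [← Finset.add_sum_erase _ _ hjs] at h3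
        rw [hdj] at h3
        simpa using h3
      have := ih (s.erase j) (Finset.erase_ssubset hjs) _ hrel2 i hi
      exact sub_eq_zero.mp this
    have hcent : ∀ i ∈ s, ∃ c : k, d' i = algebraMap k D c := by
      intro i hi
      rcases eq_or_ne i j with rfl | hij
      · exact ⟨1, by simp [hdj]⟩
      · have : d' i ∈ Subalgebra.center k D := by
          rw [Subalgebra.mem_center_iff]
          intro y; exact (hcomm i (Finset.mem_erase.mpr ⟨hij, hi⟩) y).symm
        rcases Algebra.IsCentral.mem_center_iff k |>.mp this with ⟨c, hc⟩
        exact ⟨c, hc⟩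
    choose! c hc using hcent
    have hone := hrel' 1
    have : ∑ i ∈ s, c i • u i = 0 := by
      rw [← hone]
      exact Finset.sum_congr rfl fun i hi => by
        rw [hc i hi, Algebra.smul_def, mul_one]
    have hcz := linearIndependent_iff'.mp hu s c this j hjs
    have : (1 : D) = 0 := by
      rw [← hdj, hc j hjs, hcz, map_zero]
    exact one_ne_zero this
end Aux



section Aux2
variable {k : Type*} [Field k] {D : Type*} [DivisionRing D] [Algebra k D]
variable {L : Type*} [Field L] [Algebra k L]

theorem range_le_centralizer (f : L →ₐ[k] D) :
    f.range ≤ Subalgebra.centralizer k (f.range : Set D) := by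
  rintro x ⟨a, rfl⟩
  rw [Subalgebra.mem_centralizer_iff]
  rintro y ⟨b, rfl⟩
  rw [← map_mul, ← map_mul, mul_comm]

theorem centralizer_eq_range [FiniteDimensional k D] (f : L →ₐ[k] D)
    (hmax : ∀ L' : Subalgebra k D, IsField L' → f.range ≤ L' → L' = f.range) :
    Subalgebra.centralizer k (f.range : Set D) = f.range := by
  refine le_antisymm ?_ (range_le_centralizer f)
  intro z hz
  rw [Subalgebra.mem_centralizer_iff] at hz
  set G : Set D := insert z (f.range : Set D) with hG
  set S : Subalgebra k D := Algebra.adjoin k G with hS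
  have hGcomm : ∀ x ∈ G, ∀ y ∈ G, x * y = y * x := by
    rintro x (rfl | hx) y (rfl | hy)
    · rfl
    · exact (hz y hy).symm
    · exact hz x hx
    · rcases hx with ⟨a, rfl⟩; rcases hy with ⟨b, rfl⟩
      rw [← map_mul, ← map_mul, mul_comm]
  have hGS : ∀ x ∈ G, ∀ s ∈ S, x * s = s * x := by
    intro x hx s hs
    have : S ≤ Subalgebra.centralizer k {x} := by
      rw [hS]
      apply Algebra.adjoin_le
      intro y hy
      show y ∈ Subalgebra.centralizer k {x}
      rw [Subalgebra.mem_centralizer_iff]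
      rintro t rfl
      exact hGcomm t hx y hy
    have := this hs
    rw [Subalgebra.mem_centralizer_iff] at this
    exact this x rfl
  have hScomm : ∀ s ∈ S, ∀ t ∈ S, s * t = t * s := by
    intro s hs t ht
    have : S ≤ Subalgebra.centralizer k {s} := by
      rw [hS]
      apply Algebra.adjoin_le
      intro y hy
      show y ∈ Subalgebra.centralizer k {s}
      rw [Subalgebra.mem_centralizer_iff]
      rintro u rfl
      exact (hGS y hy u hs).symm
    have := this ht
    rw [Subalgebra.mem_centralizer_iff] at this
    exact this s rfl
  have hfield : IsField S := by
    refine ⟨⟨0, 1, ?_⟩, ?_, ?_⟩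
    · intro h
      exact zero_ne_one (congrArg Subtype.val h)
    · intro a b
      exact Subtype.ext (hScomm a a.2 b b.2)
    · intro a ha
      -- left multiplication by a on S is injective k-linear, hence surjective
      have hinj : Function.Injective (LinearMap.mulLeft k a : S →ₗ[k] S) := by
        intro x y hxy
        have : a * x = a * y := by
          simpa using hxy
        exact mul_left_cancel₀ ha this
      have hsurj := LinearMap.surjective_of_injective hinj
      obtain ⟨b, hb⟩ := hsurj 1
      exact ⟨b, by simpa using hb⟩
  have hle : f.range ≤ S := by
    rw [hS]
    exact le_trans (by intro x hx; exact Set.subset_insert _ _ hx : (f.range : Set D) ⊆ G)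
      Algebra.subset_adjoin |>.trans (le_refl _) |>.trans (le_refl _)
  have := hmax S hfield hle
  have hzS : z ∈ S := Algebra.subset_adjoin (Set.mem_insert _ _)
  rw [this] at hzS
  exact hzS
end Aux2







variable {k : Type*} [Field k] {D : Type*} [DivisionRing D] [Algebra k D]
variable {L : Type*} [Field L] [Algebra k L]

/-- Type synonym for `D` viewed as a right `L`-vector space via `f`. -/
@[nolint unusedArguments]
def V (_f : L →ₐ[k] D) : Type _ := D

namespace V

variable (f : L →ₐ[k] D)

instance : DivisionRing (V f) := inferInstanceAs (DivisionRing D)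
instance : Algebra k (V f) := inferInstanceAs (Algebra k D)

/-- The identity, as an algebra equivalence `D ≃ₐ[k] V f`. -/
def equivV : D ≃ₐ[k] V f :=
  { toFun := fun d => (d : D)
    invFun := fun d => (d : D)
    left_inv := fun _ => rfl
    right_inv := fun _ => rfl
    map_mul' := fun _ _ => rfl
    map_add' := fun _ _ => rfl
    commutes' := fun _ => rfl }

/-- `f` viewed as a map into `V f`. -/
def fV : L →ₐ[k] V f := (equivV f).toAlgHom.comp f

lemma fV_comm (l l' : L) : fV f l * fV f l' = fV f l' * fV f l := by
  rw [← map_mul, ← map_mul, mul_comm]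

noncomputable instance : Module L (V f) :=
  Module.compHom (V f) ((fV f).toRingHom.toOpposite fun x y =>
    show fV f x * fV f y = fV f y * fV f x from fV_comm f x y)

lemma smul_def (l : L) (x : V f) : l • x = x * fV f l := rfl

instance : IsScalarTower k L (V f) := by
  refine ⟨fun a l x => ?_⟩
  rw [smul_def, smul_def, map_smul, Algebra.smul_def, Algebra.smul_def]
  rw [← mul_assoc, ← Algebra.commutes a x, mul_assoc]

instance : SMulCommClass L k (V f) := by
  refine ⟨fun l a x => ?_⟩
  rw [smul_def, smul_def, Algebra.smul_def, Algebra.smul_def, mul_assoc]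

instance : SMulCommClass L L (V f) := by
  refine ⟨fun l l' x => ?_⟩
  rw [smul_def, smul_def, smul_def, smul_def, mul_assoc, mul_assoc, fV_comm]

instance : IsScalarTower L L (V f) := by
  refine ⟨fun l l' x => ?_⟩
  rw [smul_eq_mul, smul_def, smul_def, smul_def, map_mul, mul_assoc, fV_comm]

instance [FiniteDimensional k D] : FiniteDimensional k (V f) :=
  inferInstanceAs (FiniteDimensional k D)

instance [FiniteDimensional k D] : FiniteDimensional L (V f) :=
  FiniteDimensional.right k L (V f)

instance : IsScalarTower k L (Module.End L (V f)) :=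
  ⟨fun a l g => LinearMap.ext fun x => smul_assoc a l (g x)⟩

/-- Left multiplication by elements of `D`, as `L`-linear endomorphisms of `V f`. -/
noncomputable def rho : D →ₐ[k] Module.End L (V f) where
  toFun d :=
    { toFun := fun x => equivV f d * x
      map_add' := fun x y => mul_add _ _ _
      map_smul' := fun l x => by
        show equivV f d * (x * fV f l) = (equivV f d * x) * fV f l
        rw [mul_assoc] }
  map_one' := LinearMap.ext fun x => by
    show equivV f 1 * x = x
    rw [map_one, one_mul]
  map_mul' d e := LinearMap.ext fun x => by
    show equivV f (d * e) * x = equivV f d * (equivV f e * x)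
    rw [map_mul, mul_assoc]
  map_zero' := LinearMap.ext fun x => by
    show equivV f 0 * x = 0
    rw [map_zero, zero_mul]
  map_add' d e := LinearMap.ext fun x => by
    show equivV f (d + e) * x = equivV f d * x + equivV f e * x
    rw [map_add, add_mul]
  commutes' a := LinearMap.ext fun x => by
    show equivV f (algebraMap k D a) * x = (algebraMap k (Module.End L (V f)) a) x
    rw [AlgEquiv.commutes, Module.algebraMap_end_apply, Algebra.smul_def]

lemma rho_apply (d : D) (x : V f) : rho f d x = equivV f d * x := rfl

/-- The main algebra homomorphism `L ⊗[k] D →ₐ[L] End_L(V f)`. -/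
noncomputable def Phi : L ⊗[k] D →ₐ[L] Module.End L (V f) :=
  Algebra.TensorProduct.lift (Algebra.ofId L (Module.End L (V f))) (rho f)
    (fun l d => LinearMap.ext fun x => by
      show (Algebra.ofId L (Module.End L (V f)) l * rho f d) x
          = (rho f d * Algebra.ofId L (Module.End L (V f)) l) x
      show l • (equivV f d * x) = equivV f d * (l • x)
      rw [smul_def, smul_def, mul_assoc])

lemma Phi_tmul (l : L) (d : D) (x : V f) :
    Phi f (l ⊗ₜ[k] d) x = equivV f d * x * fV f l := by
  show (Algebra.ofId L (Module.End L (V f)) l * rho f d) x = _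
  show l • (equivV f d * x) = _
  rw [smul_def]

end V



namespace V

variable (f : L →ₐ[k] D)

instance [Algebra.IsCentral k D] : Algebra.IsCentral k (V f) :=
  inferInstanceAs (Algebra.IsCentral k D)

lemma fV_injective : Function.Injective (fV f) :=
  (fV f).toRingHom.injective

theorem phi_injective [Algebra.IsCentral k D] : Function.Injective (Phi f) := by
  classical
  rw [injective_iff_map_eq_zero]
  intro t ht
  set ι := Module.Basis.ofVectorSpaceIndex k L with hι
  set b : Module.Basis ι k L := Module.Basis.ofVectorSpace k L with hb
  set Ψ : (ι →₀ D) →ₗ[k] L ⊗[k] D :=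
    Finsupp.lsum k (fun i => (TensorProduct.mk k L D) (b i)) with hΨdef
  have hΨ : Function.Surjective Ψ := by
    intro t
    induction t using TensorProduct.induction_on with
    | zero => exact ⟨0, map_zero Ψ⟩
    | tmul l d =>
      refine ⟨Finsupp.mapRange (· • d) (zero_smul k d) (b.repr l), ?_⟩
      rw [hΨdef, Finsupp.lsum_apply, Finsupp.sum_mapRange_index (by simp)]
      have : ((b.repr l).sum fun i c => (TensorProduct.mk k L D) (b i) (c • d))
          = (b.repr l).sum fun i c => (c • b i) ⊗ₜ[k] d := by
        refine Finsupp.sum_congr fun i _ => ?_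
        rw [TensorProduct.mk_apply, TensorProduct.smul_tmul]
      rw [this]
      simp only [Finsupp.sum]
      rw [← TensorProduct.sum_tmul]
      congr 1
      conv_rhs => rw [← b.linearCombination_repr l, Finsupp.linearCombination_apply]
      simp only [Finsupp.sum]
    | add x y hx hy =>
      obtain ⟨gx, hgx⟩ := hx
      obtain ⟨gy, hgy⟩ := hy
      exact ⟨gx + gy, by rw [map_add, hgx, hgy]⟩
  obtain ⟨g, rfl⟩ := hΨ t
  have hu : LinearIndependent k (fun i => fV f (b i)) := by
    have := b.linearIndependent
    exact this.map' (fV f).toLinearMap (LinearMap.ker_eq_bot.mpr (fV_injective f))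
  have hrel : ∀ x : V f, ∑ i ∈ g.support, equivV f (g i) * x * fV f (b i) = 0 := by
    intro x
    have h1 : Phi f (Ψ g) x = 0 := by rw [ht]; rfl
    have h2 : Ψ g = ∑ i ∈ g.support, b i ⊗ₜ[k] g i := by
      rw [hΨdef, Finsupp.lsum_apply]
      rfl
    rw [h2, map_sum] at h1
    rw [← h1]
    rw [LinearMap.coe_sum, Finset.sum_apply]
    exact Finset.sum_congr rfl fun i _ => (Phi_tmul f (b i) (g i) x).symm
  have hz := indep_lemma (D := V f) hu g.support (fun i => equivV f (g i)) hrel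
  have : g = 0 := by
    ext i
    by_cases hi : i ∈ g.support
    · have := hz i hi
      have : (g i : D) = 0 := by
        have := congrArg (equivV f).symm this
        simpa using this
      exact this
    · exact Finsupp.notMem_support_iff.mp hi
  rw [this, map_zero]

end V

namespace V

variable (f : L →ₐ[k] D)

noncomputable instance : Module (L ⊗[k] D) (V f) :=
  Module.compHom (V f) (Phi f).toRingHom

lemma asmul_def (a : L ⊗[k] D) (x : V f) : a • x = Phi f a x := rfl

instance : IsSimpleModule (L ⊗[k] D) (V f) := by
  refine { toIsSimpleOrder := ⟨fun N => ?_⟩ }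
  rcases eq_or_ne N ⊥ with h | h
  · exact Or.inl h
  · refine Or.inr ?_
    obtain ⟨x, hxN, hx0⟩ : ∃ x ∈ N, x ≠ (0 : V f) := by
      by_contra hcon
      push_neg at hcon
      exact h ((Submodule.eq_bot_iff N).mpr hcon)
    rw [eq_top_iff]
    intro y _
    have hy : y = ((1 : L) ⊗ₜ[k] ((equivV f).symm (y * x⁻¹))) • x := by
      rw [asmul_def, Phi_tmul, map_one, AlgEquiv.apply_symm_apply, mul_one,
        mul_assoc, inv_mul_cancel₀ hx0, mul_one]
    rw [hy]
    exact N.smul_mem _ hxN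

theorem endA_eq_smul [FiniteDimensional k D]
    (hmax : ∀ L' : Subalgebra k D, IsField L' → f.range ≤ L' → L' = f.range)
    (h : V f →ₗ[L ⊗[k] D] V f) : ∃ l : L, ∀ x : V f, h x = l • x := by
  have key : ∀ x : V f, h x = x * h 1 := by
    intro x
    have hx : ((1 : L) ⊗ₜ[k] ((equivV f).symm x)) • (1 : V f) = x := by
      simp [asmul_def, Phi_tmul]
    conv_lhs => rw [← hx]
    rw [map_smul, asmul_def, Phi_tmul]
    simp
  have hcomm : ∀ l : L, fV f l * h 1 = h 1 * fV f l := by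
    intro l
    have h1 := map_smul h (l ⊗ₜ[k] (1 : D)) 1
    simp only [asmul_def, Phi_tmul, map_one, one_mul] at h1
    rw [key (fV f l)] at h1
    exact h1
  have hcent : (equivV f).symm (h 1) ∈ Subalgebra.centralizer k (f.range : Set D) := by
    rw [Subalgebra.mem_centralizer_iff]
    rintro g ⟨l, rfl⟩
    apply (equivV f).injective
    rw [map_mul, map_mul, AlgEquiv.apply_symm_apply]
    exact hcomm l
  rw [centralizer_eq_range f hmax] at hcent
  obtain ⟨l₀, hl₀⟩ := hcent
  refine ⟨l₀, fun x => ?_⟩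
  rw [key x, smul_def]
  congr 1
  have h3 : equivV f (f l₀) = equivV f ((equivV f).symm (h 1)) :=
    congrArg (equivV f) hl₀
  rw [AlgEquiv.apply_symm_apply] at h3
  exact h3.symm

theorem phi_surjective [FiniteDimensional k D]
    (hmax : ∀ L' : Subalgebra k D, IsField L' → f.range ≤ L' → L' = f.range) :
    Function.Surjective (Phi f) := by
  classical
  intro g
  set m := Module.finrank L (V f) with hm
  set bV : Module.Basis (Fin m) L (V f) := Module.finBasis L (V f) with hbV
  haveI : IsSemisimpleModule (L ⊗[k] D) (Fin m → V f) := by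
    refine isSemisimpleModule_of_isSemisimpleModule_submodule'
      (p := fun i => LinearMap.range (LinearMap.single (L ⊗[k] D) (fun _ => V f) i))
      (fun i => ?_) ?_
    · have hinj : Function.Injective (LinearMap.single (L ⊗[k] D) (fun _ => V f) i) := by
        intro x y hxy
        have := congrFun (congrArg (fun z => (z : Fin m → V f)) hxy) i
        simpa using this
      exact IsSemisimpleModule.congr
        (LinearEquiv.ofInjective _ hinj).symm
    · rw [eq_top_iff]
      intro v _
      have hv : v = ∑ i, (LinearMap.single (L ⊗[k] D) (fun _ => V f) i) (v i) := by
        simpa using (Finset.univ_sum_single v).symm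
      rw [hv]
      exact Submodule.sum_mem _ fun i _ =>
        Submodule.mem_iSup_of_mem i ⟨v i, rfl⟩
  set xv : Fin m → V f := fun i => bV i with hxv
  set N : Submodule (L ⊗[k] D) (Fin m → V f) := Submodule.span (L ⊗[k] D) {xv} with hN
  have hxvN : xv ∈ N := Submodule.mem_span_singleton_self xv
  obtain ⟨N', hcompl⟩ := exists_isCompl N
  set pr : (Fin m → V f) →ₗ[L ⊗[k] D] (Fin m → V f) :=
    N.subtype ∘ₗ (N.linearProjOfIsCompl N' hcompl) with hpr
  have hpr_mem : ∀ v, pr v ∈ N := fun v => (N.linearProjOfIsCompl N' hcompl v).2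
  have hpr_fix : pr xv = xv := by
    rw [hpr, LinearMap.comp_apply]
    exact congrArg Subtype.val (Submodule.linearProjOfIsCompl_apply_left hcompl ⟨xv, hxvN⟩)
  have hcomp : ∀ (v : Fin m → V f) (i : Fin m),
      g ((pr v) i) = (pr (fun j => g (v j))) i := by
    intro v i
    have hdec : ∀ w : Fin m → V f, (pr w) i
        = ∑ j, (LinearMap.proj (R := L ⊗[k] D) i ∘ₗ pr ∘ₗ
            LinearMap.single (L ⊗[k] D) (fun _ => V f) j) (w j) := by
      intro w
      have hw : w = ∑ j, (LinearMap.single (L ⊗[k] D) (fun _ => V f) j) (w j) := by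
        simpa using (Finset.univ_sum_single w).symm
      conv_lhs => rw [hw]
      rw [map_sum]
      simp [LinearMap.proj]
    choose lam hlam using fun j => endA_eq_smul f hmax
      (LinearMap.proj (R := L ⊗[k] D) i ∘ₗ pr ∘ₗ
        LinearMap.single (L ⊗[k] D) (fun _ => V f) j)
    rw [hdec v, hdec (fun j => g (v j))]
    rw [map_sum]
    refine Finset.sum_congr rfl fun j _ => ?_
    rw [hlam j (v j), hlam j (g (v j)), map_smul]
  have hGN : (fun i => g (xv i)) ∈ N := by
    have h1 : ∀ i, g (xv i) = (pr (fun j => g (xv j))) i := by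
      intro i
      conv_lhs => rw [← hpr_fix]
      exact hcomp xv i
    have h2 : (fun i => g (xv i)) = pr (fun j => g (xv j)) := funext h1
    rw [h2]
    exact hpr_mem _
  obtain ⟨a, ha⟩ := Submodule.mem_span_singleton.mp hGN
  refine ⟨a, ?_⟩
  refine bV.ext fun i => ?_
  have := congrFun ha i
  simpa [asmul_def] using this

end V

end MaxSubfieldAux


open MaxSubfieldAux in
/-- Let `D` be a finite-dimensional central division algebra over a field `k` and let
`L` be a maximal subfield of `D` (given by an embedding `f : L →ₐ[k] D` whose range is
maximal among subfields of `D`). Then `C_D(L) = L`, `dim_k D = [L:k]²`, and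
`L ⊗[k] D ≅ M_n(L)` as `L`-algebras with `n = [L:k]`; in particular `L` splits `D`. -/
theorem maximal_subfield_of_division_algebra
    (k : Type*) [Field k] (D : Type*) [DivisionRing D] [Algebra k D]
    [FiniteDimensional k D] [Algebra.IsCentral k D]
    (L : Type*) [Field L] [Algebra k L] (f : L →ₐ[k] D)
    (hmax : ∀ L' : Subalgebra k D, IsField L' → f.range ≤ L' → L' = f.range) :
    Subalgebra.centralizer k (f.range : Set D) = f.range ∧
    Module.finrank k D = Module.finrank k L ^ 2 ∧
    Nonempty (L ⊗[k] D ≃ₐ[L]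
      Matrix (Fin (Module.finrank k L)) (Fin (Module.finrank k L)) L) := by
  haveI : FiniteDimensional k L :=
    FiniteDimensional.of_injective f.toLinearMap f.toRingHom.injective
  have hcent := centralizer_eq_range f hmax
  have hinj := V.phi_injective f
  have hsurj := V.phi_surjective f hmax
  let e : L ⊗[k] D ≃ₐ[L] Module.End L (V f) :=
    AlgEquiv.ofBijective _ ⟨hinj, hsurj⟩
  set n := Module.finrank k L with hn
  set m := Module.finrank L (V f) with hm
  have h1 : Module.finrank L (L ⊗[k] D) = Module.finrank k D :=
    Module.finrank_baseChange
  have h2 : Module.finrank L (Module.End L (V f)) = m * m :=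
    Module.finrank_linearMap L L (V f) (V f)
  have h3 : Module.finrank L (L ⊗[k] D) = Module.finrank L (Module.End L (V f)) :=
    e.toLinearEquiv.finrank_eq
  have h4 : n * m = Module.finrank k D := by
    rw [hn, hm, Module.finrank_mul_finrank k L (V f)]
    exact (V.equivV f).toLinearEquiv.finrank_eq.symm
  have hm_pos : 0 < m := Module.finrank_pos
  have hDmm : Module.finrank k D = m * m := by rw [← h1, h3, h2]
  have hnm : n = m := by
    have : n * m = m * m := by rw [h4, hDmm]
    exact Nat.eq_of_mul_eq_mul_right hm_pos this
  refine ⟨hcent, ?_, ?_⟩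
  · rw [hDmm, ← hnm, sq]
  · have hb : Module.finrank L (V f) = n := hnm.symm
    let bV : Module.Basis (Fin n) L (V f) := Module.finBasisOfFinrankEq L (V f) hb
    exact ⟨e.trans (algEquivMatrix bV)⟩
end

section
/- (Frobenius) Every finite-dimensional associative unital division algebra D over the field ℝ of real numbers is isomorphic as an ℝ-algebra to ℝ, to ℂ, or to the quaternion algebra ℍ. -/
open scoped Quaternion

section Aux

lemma frob_field_finrank_le_two (A : Type*) [Field A] [Algebra ℝ A] [FiniteDimensional ℝ A] :
    Module.finrank ℝ A ≤ 2 := by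
  have : Algebra.IsAlgebraic ℝ A := Algebra.IsAlgebraic.of_finite ℝ A
  let f : A →ₐ[ℝ] ℂ := IsAlgClosed.lift
  have hinj : Function.Injective f := f.toRingHom.injective
  calc Module.finrank ℝ A ≤ Module.finrank ℝ ℂ :=
        LinearMap.finrank_le_finrank_of_injective (f := f.toLinearMap) hinj
    _ = 2 := Complex.finrank_real_complex

variable {D : Type*} [DivisionRing D] [Algebra ℝ D] [FiniteDimensional ℝ D]

lemma frob_adjoin_finrank_le_two (s : Set D)
    (h : ∀ a ∈ s, ∀ b ∈ s, a * b = b * a) :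
    Module.finrank ℝ (Algebra.adjoin ℝ s) ≤ 2 := by
  let A := Algebra.adjoin ℝ s
  letI : CommRing A := Algebra.adjoinCommRingOfComm ℝ h
  haveI : IsDomain A := inferInstance
  haveI : FiniteDimensional ℝ A := inferInstance
  haveI : Algebra.IsIntegral ℝ A := Algebra.IsIntegral.of_finite ℝ A
  have hf : IsField A := isField_of_isIntegral_of_isField' (R := ℝ) (Semifield.toIsField ℝ)
  letI : Field A := hf.toField
  exact frob_field_finrank_le_two A

omit [FiniteDimensional ℝ D] in
lemma frob_smul_one_injective : Function.Injective (fun r : ℝ => r • (1 : D)) := by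
  intro a b hab
  simp only at hab
  have h : (a - b) • (1 : D) = 0 := by
    rw [sub_smul, hab, sub_self]
  rcases smul_eq_zero.mp h with h | h
  · exact sub_eq_zero.mp h
  · exact absurd h one_ne_zero

/-- every element satisfies a real quadratic relation -/
lemma frob_quadratic (x : D) : ∃ a b : ℝ, x * x = a • x + b • (1 : D) := by
  have hle := frob_adjoin_finrank_le_two ({x} : Set D)
    (by rintro a rfl b rfl; rfl)
  set A := Algebra.adjoin ℝ ({x} : Set D) with hA
  have hxA : x ∈ A := Algebra.subset_adjoin rfl
  set xA : A := ⟨x, hxA⟩ with hxAdef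
  have hnli : ¬ LinearIndependent ℝ ![(1 : A), xA, xA * xA] := by
    intro hli
    have := hli.fintype_card_le_finrank
    simp only [Fintype.card_fin] at this
    omega
  obtain ⟨g, hg, ⟨z, hz⟩⟩ := Fintype.not_linearIndependent_iff.mp hnli
  have hgD : g 0 • (1 : D) + g 1 • x + g 2 • (x * x) = 0 := by
    have := congrArg (Subtype.val) hg
    simpa [Fin.sum_univ_three, add_assoc] using this
  by_cases h2 : g 2 ≠ 0
  · refine ⟨-g 1 / g 2, -g 0 / g 2, ?_⟩
    apply smul_right_injective D h2
    dsimp only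
    rw [smul_add, smul_smul, smul_smul]
    rw [mul_div_cancel₀ _ h2, mul_div_cancel₀ _ h2]
    have h3 : g 2 • (x * x) = -(g 0 • (1:D) + g 1 • x) :=
      eq_neg_of_add_eq_zero_right hgD
    rw [h3]; module
  · push_neg at h2
    rw [h2, zero_smul, add_zero] at hgD
    by_cases h1 : g 1 ≠ 0
    · have hx1 : x = (-g 0 / g 1) • (1 : D) := by
        apply smul_right_injective D h1
        dsimp only
        rw [smul_smul, mul_div_cancel₀ _ h1]
        have h4 : g 1 • x = -(g 0 • (1:D)) := eq_neg_of_add_eq_zero_right hgD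
        rw [h4]; module
      refine ⟨-g 0 / g 1, 0, ?_⟩
      rw [zero_smul, add_zero, hx1]
      rw [smul_mul_assoc, one_mul]
    · push_neg at h1
      rw [h1, zero_smul, add_zero] at hgD
      rcases smul_eq_zero.mp hgD with h | h
      · exfalso
        fin_cases z <;> simp_all
      · exact absurd h one_ne_zero

omit [FiniteDimensional ℝ D] in
lemma frob_one_i_li {i : D} (hi : i * i = -1) :
    LinearIndependent ℝ ![(1 : D), i] := by
  rw [LinearIndependent.pair_iff]
  intro a b hab
  by_cases hb : b = 0
  · subst hb
    rw [zero_smul, add_zero] at hab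
    rcases smul_eq_zero.mp hab with h | h
    · exact ⟨h, rfl⟩
    · exact absurd h one_ne_zero
  · exfalso
    have hx : i = (-a / b) • (1 : D) := by
      apply smul_right_injective D hb
      dsimp only
      rw [smul_smul, mul_div_cancel₀ _ hb]
      have h5 : b • i = -(a • (1:D)) := eq_neg_of_add_eq_zero_right hab
      rw [h5]; module
    set c := -a / b with hc
    have hcc : ((c * c : ℝ)) • (1 : D) = ((-1 : ℝ)) • (1 : D) := by
      have h1 : i * i = (c * c) • (1 : D) := by
        rw [hx, smul_mul_assoc, mul_smul_comm, one_mul, smul_smul]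
      rw [← h1, hi]; module
    have := frob_smul_one_injective hcc
    nlinarith [mul_self_nonneg c]

/-- anything commuting with a square root of -1 lies in its ℝ-plane -/
lemma frob_centralizer {i : D} (hi : i * i = -1) {x : D} (hx : i * x = x * i) :
    ∃ a b : ℝ, x = a • (1 : D) + b • i := by
  have hle := frob_adjoin_finrank_le_two ({i, x} : Set D) ?comm
  case comm =>
    rintro a (rfl | rfl) b (rfl | rfl)
    · rfl
    · exact hx
    · exact hx.symm
    · rfl
  set A := Algebra.adjoin ℝ ({i, x} : Set D) with hA
  have hiA : i ∈ A := Algebra.subset_adjoin (by simp)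
  have hxA : x ∈ A := Algebra.subset_adjoin (by simp)
  haveI : FiniteDimensional ℝ A := inferInstance
  set iA : A := ⟨i, hiA⟩ with hiAdef
  have hli : LinearIndependent ℝ ![(1 : A), iA] := by
    apply LinearIndependent.of_comp (A.toSubmodule.subtype)
    have h7 : (A.toSubmodule.subtype ∘ ![(1 : A), iA]) = ![(1 : D), i] := by
      ext z; fin_cases z <;> rfl
    rw [h7]
    exact frob_one_i_li hi
  have hcard : Module.finrank ℝ (Submodule.span ℝ (Set.range ![(1 : A), iA])) = 2 := by
    rw [finrank_span_eq_card hli]; simp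
  have hAle := Submodule.finrank_le (Submodule.span ℝ (Set.range ![(1 : A), iA]))
  have hsp : Submodule.span ℝ (Set.range ![(1 : A), iA]) = ⊤ := by
    apply Submodule.eq_top_of_finrank_eq
    omega
  have hmem : (⟨x, hxA⟩ : A) ∈ Submodule.span ℝ (Set.range ![(1 : A), iA]) := by
    rw [hsp]; trivial
  rw [Submodule.mem_span_range_iff_exists_fun ℝ] at hmem
  obtain ⟨cf, hab⟩ := hmem
  refine ⟨cf 0, cf 1, ?_⟩
  have := congrArg Subtype.val hab
  simp only [Fin.sum_univ_two] at this
  simpa using this.symm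

omit [FiniteDimensional ℝ D] in
lemma frob_neg_sq {y : D} (hy : ∀ r : ℝ, y ≠ r • 1) {r : ℝ} (h : y * y = r • 1) :
    r < 0 := by
  by_contra hr
  push_neg at hr
  set c := Real.sqrt r with hc
  have hc2 : c * c = r := Real.mul_self_sqrt hr
  have hfac : (y - c • 1) * (y + c • 1) = 0 := by
    have hexp : (y - c • 1) * (y + c • 1)
        = y * y + c • y - c • y - (c * c) • (1:D) := by
      simp only [sub_mul, mul_add, smul_mul_assoc, mul_smul_comm, smul_smul,
        one_mul, mul_one]
      module
    rw [hexp, h, hc2]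
    abel
  rcases mul_eq_zero.mp hfac with h0 | h0
  · exact hy c (by rw [← sub_eq_zero]; exact h0)
  · refine hy (-c) ?_
    rw [← sub_eq_zero, neg_smul, sub_neg_eq_add]; exact h0

omit [FiniteDimensional ℝ D] in
lemma frob_normalize {y : D} {r : ℝ} (hr : r < 0) (h : y * y = r • 1) :
    ∃ c : ℝ, c ≠ 0 ∧ (c • y) * (c • y) = -1 := by
  have hnr : (0:ℝ) < -r := by linarith
  set s := Real.sqrt (-r) with hs
  have hs0 : s ≠ 0 := by positivity
  refine ⟨s⁻¹, inv_ne_zero hs0, ?_⟩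
  have key : (s⁻¹ • y) * (s⁻¹ • y) = (s⁻¹ * (s⁻¹ * r)) • (1:D) := by
    simp only [smul_mul_assoc, mul_smul_comm, h, smul_smul]
  rw [key]
  have hval : s⁻¹ * (s⁻¹ * r) = -1 := by
    have hss : s * s = -r := Real.mul_self_sqrt (le_of_lt hnr)
    field_simp
    linarith [hss]
  rw [hval]; module

end Aux

/-- (Frobenius) Every finite-dimensional associative unital division algebra
over `ℝ` is isomorphic as an `ℝ`-algebra to `ℝ`, `ℂ`, or the quaternions `ℍ`. -/
theorem frobenius_division_algebras
    (D : Type*) [DivisionRing D] [Algebra ℝ D] [FiniteDimensional ℝ D] :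
    Nonempty (D ≃ₐ[ℝ] ℝ) ∨ Nonempty (D ≃ₐ[ℝ] ℂ) ∨ Nonempty (D ≃ₐ[ℝ] ℍ[ℝ]) := by
  by_cases hcomm : ∀ x y : D, x * y = y * x
  · -- commutative case: D is a field, finrank 1 or 2
    letI : Field D := { ‹DivisionRing D› with mul_comm := hcomm }
    have hle : Module.finrank ℝ D ≤ 2 := frob_field_finrank_le_two D
    have hge : 1 ≤ Module.finrank ℝ D := Module.finrank_pos
    interval_cases h : Module.finrank ℝ D
    · -- finrank 1 : D ≃ ℝ
      left
      have hinj : Function.Injective (Algebra.ofId ℝ D) :=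
        (Algebra.ofId ℝ D).toRingHom.injective
      have hr : LinearMap.range (Algebra.ofId ℝ D).toLinearMap = ⊤ := by
        apply Submodule.eq_top_of_finrank_eq
        rw [LinearMap.finrank_range_of_inj hinj, h]
        exact Module.finrank_self ℝ
      have hbij : Function.Bijective (Algebra.ofId ℝ D) :=
        ⟨hinj, LinearMap.range_eq_top.mp hr⟩
      exact ⟨(AlgEquiv.ofBijective _ hbij).symm⟩
    · -- finrank 2 : D ≃ ℂ
      right; left
      haveI : Algebra.IsAlgebraic ℝ D := Algebra.IsAlgebraic.of_finite ℝ D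
      let f : D →ₐ[ℝ] ℂ := IsAlgClosed.lift
      have hinj : Function.Injective f := f.toRingHom.injective
      have hr : LinearMap.range f.toLinearMap = ⊤ := by
        apply Submodule.eq_top_of_finrank_eq
        rw [LinearMap.finrank_range_of_inj hinj, h, Complex.finrank_real_complex]
      exact ⟨AlgEquiv.ofBijective f ⟨hinj, LinearMap.range_eq_top.mp hr⟩⟩
  · -- noncommutative case: build the quaternions
    right; right
    push_neg at hcomm
    -- find an element not in ℝ·1
    have hex : ∃ x : D, ∀ r : ℝ, x ≠ r • 1 := by
      by_contra hc
      push_neg at hc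
      obtain ⟨x, y, hxy⟩ := hcomm
      obtain ⟨r, hr⟩ := hc x
      obtain ⟨s, hsy⟩ := hc y
      apply hxy
      rw [hr, hsy, smul_mul_assoc, mul_smul_comm, smul_mul_assoc, mul_smul_comm,
        smul_smul, smul_smul, mul_comm r s]
    -- construct i with i*i = -1
    have hexi : ∃ i : D, i * i = -1 := by
      obtain ⟨x, hx⟩ := hex
      obtain ⟨a, b, hq⟩ := frob_quadratic x
      have hu : (x - (a/2) • 1) * (x - (a/2) • 1) = (b + a^2/4) • (1:D) := by
        have hexp : (x - (a/2) • 1) * (x - (a/2) • 1)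
            = x * x - (a/2) • x - (a/2) • x + ((a/2)*(a/2)) • (1:D) := by
          simp only [sub_mul, mul_sub, smul_mul_assoc, mul_smul_comm, smul_smul,
            one_mul, mul_one]
          module
        rw [hexp, hq]
        have h8 : a/2*(a/2) = a^2/4 := by ring
        rw [h8]
        module
      set u := x - (a/2) • 1 with hudef
      have hu' : ∀ r : ℝ, u ≠ r • 1 := by
        intro r hr
        apply hx (r + a/2)
        rw [show x = u + (a/2) • (1:D) by rw [hudef]; abel, hr]
        module
      have hneg : b + a^2/4 < 0 := frob_neg_sq hu' hu
      obtain ⟨c, hc0, hcu⟩ := frob_normalize hneg hu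
      exact ⟨c • u, hcu⟩
    obtain ⟨i, hi⟩ := hexi
    have hii : ∀ z : D, i * (i * z) = -z := fun z => by rw [← mul_assoc, hi, neg_one_mul]
    have hii' : ∀ z : D, (z * i) * i = -z := fun z => by rw [mul_assoc, hi, mul_neg_one]
    have hine : i ≠ 0 := by
      intro h0
      rw [h0, zero_mul] at hi
      exact one_ne_zero (neg_eq_zero.mp hi.symm)
    -- find j0 anticommuting with i
    have hexj : ∃ j0 : D, j0 ≠ 0 ∧ i * j0 = -(j0 * i) := by
      by_contra hc
      push_neg at hc
      have hall : ∀ y : D, i * y = y * i := by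
        intro y
        set m := y + i * (y * i) with hm
        have hanti : i * m = -(m * i) := by
          rw [hm, mul_add, add_mul, hii]
          rw [mul_assoc i (y * i) i, hii', mul_neg]
          abel
        by_cases hm0 : m = 0
        · have hyi : i * (y * i) = -y := by
            have h9 : y + i * (y * i) = 0 := by rw [← hm]; exact hm0
            exact eq_neg_of_add_eq_zero_right h9
          have h5 := congrArg (fun z => i * z) hyi
          beta_reduce at h5
          rw [hii, mul_neg] at h5
          exact (neg_injective h5).symm
        · exact absurd hanti (hc m hm0)
      -- then D is commutative, contradiction
      obtain ⟨p, q, hpq⟩ := hcomm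
      apply hpq
      obtain ⟨a1, b1, h1⟩ := frob_centralizer hi (hall p)
      obtain ⟨a2, b2, h2⟩ := frob_centralizer hi (hall q)
      rw [h1, h2]
      simp only [add_mul, mul_add, smul_mul_assoc, mul_smul_comm, one_mul, mul_one,
        smul_smul]
      module
    obtain ⟨j0, hj0ne, hj0⟩ := hexj
    -- j0 * j0 is a negative real
    obtain ⟨a', b', hq'⟩ := frob_quadratic j0
    have ha' : a' = 0 := by
      by_contra ha'
      have hcsq : i * (j0 * j0) = (j0 * j0) * i := by
        calc i * (j0 * j0) = (i * j0) * j0 := by rw [mul_assoc]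
          _ = (-(j0 * i)) * j0 := by rw [hj0]
          _ = -(j0 * (i * j0)) := by noncomm_ring
          _ = -(j0 * (-(j0 * i))) := by rw [hj0]
          _ = (j0 * j0) * i := by noncomm_ring
      rw [hq'] at hcsq
      simp only [mul_add, add_mul, mul_smul_comm, smul_mul_assoc, mul_one, one_mul]
        at hcsq
      have h6 : a' • (i * j0) = a' • (j0 * i) := by
        have h7 := congrArg (fun z => z - b' • i) hcsq
        simpa using h7
      have hcij : i * j0 = j0 * i := smul_right_injective D ha' h6
      rw [hcij] at hj0
      have h10 : (2:ℝ) • (j0 * i) = 0 := by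
        rw [two_smul]
        nth_rewrite 1 [hj0]; abel
      have hji : j0 * i = 0 := by
        rcases smul_eq_zero.mp h10 with h | h
        · norm_num at h
        · exact h
      rcases mul_eq_zero.mp hji with h | h
      · exact hj0ne h
      · exact hine h
    rw [ha', zero_smul, zero_add] at hq'
    have hj0x : ∀ r : ℝ, j0 ≠ r • 1 := by
      intro r hr
      have h1 : i * j0 = r • i := by rw [hr, mul_smul_comm, mul_one]
      have h2 : j0 * i = r • i := by rw [hr, smul_mul_assoc, one_mul]
      rw [h1, h2] at hj0
      have h11 : (2:ℝ) • (r • i) = 0 := by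
        rw [two_smul]
        nth_rewrite 1 [hj0]; abel
      rcases smul_eq_zero.mp h11 with h | h
      · norm_num at h
      · rcases smul_eq_zero.mp h with h' | h'
        · subst h'; rw [zero_smul] at hr; exact hj0ne hr
        · exact hine h'
    have hb'neg : b' < 0 := frob_neg_sq hj0x hq'
    have hexjj : ∃ j : D, j * j = -1 ∧ i * j = -(j * i) := by
      obtain ⟨d, hd0, hdj⟩ := frob_normalize hb'neg hq'
      refine ⟨d • j0, hdj, ?_⟩
      rw [mul_smul_comm, smul_mul_assoc, hj0, smul_neg]
    obtain ⟨j, hj, hij⟩ := hexjj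
    have hjne : j ≠ 0 := by
      intro h0
      rw [h0, zero_mul] at hj
      exact one_ne_zero (neg_eq_zero.mp hj.symm)
    -- build the quaternion basis
    let Q : QuaternionAlgebra.Basis D (-1 : ℝ) (0 : ℝ) (-1 : ℝ) :=
      { i := i
        j := j
        k := i * j
        i_mul_i := by rw [hi]; module
        j_mul_j := by rw [hj]; module
        i_mul_j := rfl
        j_mul_i := by rw [hij, zero_smul, zero_sub, neg_neg] }
    -- injectivity
    let f : ℍ[ℝ] →ₐ[ℝ] D := Q.liftHom
    have hinj : Function.Injective f := f.toRingHom.injective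
    -- surjectivity
    have hsurj : Function.Surjective f := by
      intro y
      set p := y - i * (y * i) with hpdef
      set m := y + i * (y * i) with hmdef
      have hpcomm : i * p = p * i := by
        rw [hpdef, mul_sub, sub_mul, hii]
        rw [mul_assoc i (y * i) i, hii', mul_neg]
        abel
      have hmanti : i * m = -(m * i) := by
        rw [hmdef, mul_add, add_mul, hii]
        rw [mul_assoc i (y * i) i, hii', mul_neg]
        abel
      obtain ⟨a1, b1, hp⟩ := frob_centralizer hi hpcomm
      have hjinv : j⁻¹ * i = -(i * j⁻¹) := by
        calc j⁻¹ * i = j⁻¹ * i * (j * j⁻¹) := by rw [mul_inv_cancel₀ hjne, mul_one]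
          _ = j⁻¹ * (i * j) * j⁻¹ := by noncomm_ring
          _ = j⁻¹ * (-(j * i)) * j⁻¹ := by rw [hij]
          _ = -((j⁻¹ * j) * (i * j⁻¹)) := by noncomm_ring
          _ = -(i * j⁻¹) := by rw [inv_mul_cancel₀ hjne, one_mul]
      have hwcomm : i * (m * j⁻¹) = (m * j⁻¹) * i := by
        calc i * (m * j⁻¹) = (i * m) * j⁻¹ := by rw [mul_assoc]
          _ = (-(m * i)) * j⁻¹ := by rw [hmanti]
          _ = -(m * (i * j⁻¹)) := by noncomm_ring
          _ = m * (-(i * j⁻¹)) := by rw [mul_neg]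
          _ = m * (j⁻¹ * i) := by rw [hjinv]
          _ = (m * j⁻¹) * i := by rw [mul_assoc]
      obtain ⟨c1, d1, hw⟩ := frob_centralizer hi hwcomm
      have hm : m = c1 • j + d1 • (i * j) := by
        have h1 : m = (m * j⁻¹) * j := by
          rw [mul_assoc, inv_mul_cancel₀ hjne, mul_one]
        rw [h1, hw, add_mul, smul_mul_assoc, smul_mul_assoc, one_mul]
      have hy2 : y = (2:ℝ)⁻¹ • p + (2:ℝ)⁻¹ • m := by
        rw [hpdef, hmdef, ← smul_add]
        have h12 : y - i * (y * i) + (y + i * (y * i)) = (2:ℝ) • y := by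
          rw [two_smul]; abel
        rw [h12, smul_smul]
        norm_num
      refine ⟨⟨2⁻¹ * a1, 2⁻¹ * b1, 2⁻¹ * c1, 2⁻¹ * d1⟩, ?_⟩
      show Q.lift _ = y
      show algebraMap ℝ D (2⁻¹ * a1) + (2⁻¹ * b1) • Q.i + (2⁻¹ * c1) • Q.j
          + (2⁻¹ * d1) • Q.k = y
      show algebraMap ℝ D (2⁻¹ * a1) + (2⁻¹ * b1) • i + (2⁻¹ * c1) • j
          + (2⁻¹ * d1) • (i * j) = y
      rw [Algebra.algebraMap_eq_smul_one, hy2, hp, hm]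
      module
    exact ⟨(AlgEquiv.ofBijective f ⟨hinj, hsurj⟩).symm⟩
end

section
/- Let k be a field complete with respect to a nontrivial absolute value |·|, and let L/k be a finite field extension with n = [L:k]. If |·| extends to an absolute value on L, then this extension is unique, it is given by the formula |a| = |N_{L/k}(a)|^{1/n} for all a ∈ L, and L is complete with respect to it. -/
/-- A sequence is Cauchy with respect to an absolute value. -/
def IsCauchyWrt {K : Type*} [Field K] (v : AbsoluteValue K ℝ) (s : ℕ → K) : Prop :=
  ∀ ε : ℝ, 0 < ε → ∃ N : ℕ, ∀ m n : ℕ, N ≤ m → N ≤ n → v (s m - s n) < ε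

/-- A sequence converges to a limit with respect to an absolute value. -/
def TendsToWrt {K : Type*} [Field K] (v : AbsoluteValue K ℝ) (s : ℕ → K) (x : K) : Prop :=
  ∀ ε : ℝ, 0 < ε → ∃ N : ℕ, ∀ m : ℕ, N ≤ m → v (s m - x) < ε

open Module Finset in
private lemma aux_le_of_pow_le_pow {p q D : ℝ} (hp : 0 ≤ p) (hq : 0 ≤ q) (hD : 0 < D)
    (h : ∀ m : ℕ, p ^ m ≤ D * q ^ m) : p ≤ q := by
  by_contra hlt
  push_neg at hlt
  have hq0 : 0 < p := lt_of_le_of_lt hq hlt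
  rcases eq_or_lt_of_le hq with h0 | h0
  · have h1 := h 1
    rw [← h0] at h1
    simp at h1
    exact absurd h1 (not_le.mpr (by positivity : (0:ℝ) < p))
  · have h1 : 1 < p / q := (one_lt_div h0).2 hlt
    obtain ⟨m, hm⟩ := pow_unbounded_of_one_lt D h1
    rw [div_pow] at hm
    have h2 : p ^ m ≤ D * q ^ m := h m
    have hqm : 0 < q ^ m := by positivity
    rw [lt_div_iff₀ hqm] at hm
    linarith

open Module Finset in
private theorem aux_key
    {k : Type*} [Field k] (v : AbsoluteValue k ℝ)
    (hnt : ∃ a : k, a ≠ 0 ∧ v a ≠ 1)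
    (hcomplete : ∀ s : ℕ → k, IsCauchyWrt v s → ∃ x : k, TendsToWrt v s x)
    {L : Type*} [Field L] [Algebra k L] [FiniteDimensional k L]
    (w : AbsoluteValue L ℝ) (hext : ∀ a : k, w (algebraMap k L a) = v a) :
    (∀ x : L, w x ^ (Module.finrank k L) = v (Algebra.norm k x)) ∧
    (∀ s : ℕ → L, IsCauchyWrt w s → ∃ x : L, TendsToWrt w s x) := by
  letI : NormedField k := v.toNormedField
  have hnorm : ∀ a : k, ‖a‖ = v a := fun _ => rfl
  letI : NontriviallyNormedField k := by
    refine ⟨?_⟩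
    obtain ⟨a, ha0, ha1⟩ := hnt
    rcases lt_or_gt_of_ne ha1 with h | h
    · refine ⟨a⁻¹, ?_⟩
      rw [hnorm, map_inv₀]
      have : 0 < v a := v.pos ha0
      rw [lt_inv_comm₀ one_pos this]
      simpa using h
    · exact ⟨a, by rw [hnorm]; exact h⟩
  haveI : CompleteSpace k := by
    apply UniformSpace.complete_of_cauchySeq_tendsto
    intro u hu
    obtain ⟨x, hx⟩ := hcomplete u (by
      intro ε hε
      obtain ⟨N, hN⟩ := Metric.cauchySeq_iff.mp hu ε hε
      exact ⟨N, fun m n hm hn => by have := hN m hm n hn; rwa [dist_eq_norm] at this⟩)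
    refine ⟨x, Metric.tendsto_atTop.mpr ?_⟩
    intro ε hε
    obtain ⟨N, hN⟩ := hx ε hε
    exact ⟨N, fun n hn => by rw [dist_eq_norm]; exact hN n hn⟩
  letI : NormedField L := w.toNormedField
  have hnormL : ∀ a : L, ‖a‖ = w a := fun _ => rfl
  letI : NormedSpace k L := by
    refine ⟨fun a x => ?_⟩
    rw [Algebra.smul_def]
    show w _ ≤ v a * w x
    rw [map_mul, hext]
  haveI : CompleteSpace L := FiniteDimensional.complete k L
  constructor
  · -- the power formula
    set n := Module.finrank k L with hnn
    have hn0 : 0 < n := Module.finrank_pos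
    let b : Basis (Fin n) k L := Module.finBasis k L
    let g : Fin n → (L →L[k] k) := fun i => LinearMap.toContinuousLinearMap (b.coord i)
    have hg : ∀ (i : Fin n) (y : L), v (b.repr y i) ≤ ‖g i‖ * w y := by
      intro i y
      have h1 : v (b.repr y i) = ‖(g i) y‖ := by
        simp only [g, LinearMap.coe_toContinuousLinearMap', Basis.coord_apply, hnorm]
      rw [h1]
      have := (g i).le_opNorm y
      rwa [hnormL] at this
    set C : ℝ := ∑ i, ‖g i‖ with hC
    set B : ℝ := ∑ j, w (b j) with hB
    have hC0 : 0 ≤ C := Finset.sum_nonneg fun i _ => norm_nonneg _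
    have hB0 : 0 ≤ B := Finset.sum_nonneg fun j _ => w.nonneg _
    have hCle : ∀ i, ‖g i‖ ≤ C :=
      fun i => Finset.single_le_sum (fun j (_ : j ∈ Finset.univ) => norm_nonneg (g j))
        (Finset.mem_univ i)
    have hBle : ∀ j, w (b j) ≤ B :=
      fun j => Finset.single_le_sum (fun i (_ : i ∈ Finset.univ) => w.nonneg (b i))
        (Finset.mem_univ j)
    set D : ℝ := (n.factorial : ℝ) * (C * B) ^ n + 1 with hD
    have hD0 : 0 < D := by positivity
    have hbound : ∀ x : L, v (Algebra.norm k x) ≤ D * w x ^ n := by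
      intro x
      rw [Algebra.norm_eq_matrix_det b x]
      have hentry : ∀ i j, v (Algebra.leftMulMatrix b x i j) ≤ C * B * w x := by
        intro i j
        rw [Algebra.leftMulMatrix_eq_repr_mul]
        calc v (b.repr (x * b j) i) ≤ ‖g i‖ * w (x * b j) := hg i _
          _ = ‖g i‖ * w (b j) * w x := by rw [map_mul]; ring
          _ ≤ C * B * w x := by
              apply mul_le_mul_of_nonneg_right _ (w.nonneg x)
              exact mul_le_mul (hCle i) (hBle j) (w.nonneg _) hC0
      calc v (Algebra.leftMulMatrix b x).det
          ≤ Nat.factorial (Fintype.card (Fin n)) • (C * B * w x) ^ Fintype.card (Fin n) :=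
            Matrix.det_le hentry
        _ = (n.factorial : ℝ) * ((C * B) ^ n * w x ^ n) := by
            rw [Fintype.card_fin, nsmul_eq_mul, mul_pow]
        _ ≤ D * w x ^ n := by
            rw [hD]
            have hwx : 0 ≤ w x ^ n := by positivity
            nlinarith [mul_nonneg (mul_nonneg (Nat.cast_nonneg n.factorial) (pow_nonneg (mul_nonneg hC0 hB0) n)) hwx]
    have hle : ∀ x : L, v (Algebra.norm k x) ≤ w x ^ n := by
      intro x
      refine aux_le_of_pow_le_pow (v.nonneg _) (by positivity) hD0 (fun m => ?_)
      calc v (Algebra.norm k x) ^ m = v (Algebra.norm k (x ^ m)) := by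
            rw [map_pow, map_pow]
        _ ≤ D * w (x ^ m) ^ n := hbound _
        _ = D * (w x ^ n) ^ m := by rw [map_pow, ← pow_mul, ← pow_mul, Nat.mul_comm]
    intro x
    rcases eq_or_ne x 0 with rfl | hx
    · rw [map_zero, zero_pow hn0.ne', Algebra.norm_zero, map_zero]
    · refine le_antisymm ?_ (hle x)
      have hNx : Algebra.norm k x ≠ 0 := Algebra.norm_ne_zero_iff.mpr hx
      have hNinv : Algebra.norm k x⁻¹ = (Algebra.norm k x)⁻¹ := by
        refine eq_inv_of_mul_eq_one_left ?_
        rw [← map_mul, inv_mul_cancel₀ hx, map_one]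
      have h1 := hle x⁻¹
      rw [hNinv, map_inv₀, map_inv₀, inv_pow] at h1
      have hw : 0 < w x ^ n := pow_pos (w.pos hx) n
      have hv : 0 < v (Algebra.norm k x) := v.pos hNx
      exact (inv_le_inv₀ hv hw).mp h1
  · intro s hs
    have hcs : CauchySeq s := by
      apply Metric.cauchySeq_iff.mpr
      intro ε hε
      obtain ⟨N, hN⟩ := hs ε hε
      exact ⟨N, fun m hm n hn => by rw [dist_eq_norm]; exact hN m n hm hn⟩
    obtain ⟨x, hx⟩ := cauchySeq_tendsto_of_complete hcs
    refine ⟨x, fun ε hε => ?_⟩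
    obtain ⟨N, hN⟩ := Metric.tendsto_atTop.mp hx ε hε
    exact ⟨N, fun m hm => by have := hN m hm; rwa [dist_eq_norm] at this⟩

/-- Let `k` be complete with respect to a nontrivial absolute value `v` and let `L/k` be
a finite extension of degree `n`. If `v` extends to an absolute value `w` on `L`, then
`w` is given by `w a = v(N_{L/k}(a))^(1/n)`, the extension is unique, and `L` is complete
with respect to it. -/
theorem unique_absolute_value_extension
    (k : Type*) [Field k] (v : AbsoluteValue k ℝ)
    (hnt : ∃ a : k, a ≠ 0 ∧ v a ≠ 1)
    (hcomplete : ∀ s : ℕ → k, IsCauchyWrt v s → ∃ x : k, TendsToWrt v s x)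
    (L : Type*) [Field L] [Algebra k L] [FiniteDimensional k L]
    (w : AbsoluteValue L ℝ) (hext : ∀ a : k, w (algebraMap k L a) = v a) :
    (∀ a : L, w a = v (Algebra.norm k a) ^ (1 / (Module.finrank k L : ℝ))) ∧
    (∀ w' : AbsoluteValue L ℝ, (∀ a : k, w' (algebraMap k L a) = v a) → w' = w) ∧
    (∀ s : ℕ → L, IsCauchyWrt w s → ∃ x : L, TendsToWrt w s x) := by
  obtain ⟨hpow, hcompL⟩ := aux_key v hnt hcomplete w hext
  have hn0 : (Module.finrank k L) ≠ 0 := Module.finrank_pos.ne'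
  have formula : ∀ w' : AbsoluteValue L ℝ, (∀ a : k, w' (algebraMap k L a) = v a) →
      ∀ a : L, w' a = v (Algebra.norm k a) ^ (1 / (Module.finrank k L : ℝ)) := by
    intro w' hext' a
    obtain ⟨hpow', _⟩ := aux_key v hnt hcomplete w' hext'
    rw [← hpow' a, one_div, Real.pow_rpow_inv_natCast (w'.nonneg a) hn0]
  refine ⟨formula w hext, ?_, hcompL⟩
  intro w' hext'
  ext a
  rw [formula w' hext' a, formula w hext a]
end

section
/- Let 𝔽_q ⊆ 𝔽_{q^n} be an extension of finite fields. Then every a ∈ 𝔽_qˣ is the norm N_{𝔽_{q^n}/𝔽_q}(b) of some element b ∈ 𝔽_{q^n} that is not contained in any proper subfield of 𝔽_{q^n} containing 𝔽_q (equivalently, 𝔽_q(b) = 𝔽_{q^n}). -/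
open Polynomial Finset

/-- For an extension of finite fields `𝔽_q ⊆ 𝔽_{q^n}`, every nonzero `a ∈ 𝔽_q` is the
norm of some `b ∈ 𝔽_{q^n}` that lies in no proper subfield containing `𝔽_q`,
i.e. with `𝔽_q(b) = 𝔽_{q^n}`. -/
theorem finite_field_norm_of_generator
    (K L : Type*) [Field K] [Field L] [Algebra K L] [Finite L] :
    ∀ a : K, a ≠ 0 → ∃ b : L,
      IntermediateField.adjoin K {b} = ⊤ ∧ Algebra.norm K b = a := by
  classical
  intro a ha
  have hKL : Function.Injective (algebraMap K L) := (algebraMap K L).injective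
  have : Finite K := Finite.of_injective _ hKL
  cases nonempty_fintype K
  cases nonempty_fintype L
  haveI : Module.Finite K L := Module.Finite.of_finite
  set q := Fintype.card K with hq
  have hq2 : 2 ≤ q := Fintype.one_lt_card
  set n := Module.finrank K L with hn
  have hcardL : Fintype.card L = q ^ n := Module.card_eq_pow_finrank
  have hn1 : 1 ≤ n := Module.finrank_pos
  set E := ∑ i ∈ Finset.range n, q ^ i with hE
  have hE1 : 1 ≤ E := by
    rw [hE]
    calc 1 = ∑ i ∈ Finset.range 1, q ^ i := by simp
    _ ≤ ∑ i ∈ Finset.range n, q ^ i :=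
      Finset.sum_le_sum_of_subset (Finset.range_subset_range.2 hn1)
  have hEq : E * (q - 1) = q ^ n - 1 := by
    have h := geom_sum_mul (q : ℤ) n
    have h1 : (1:ℕ) ≤ q := by omega
    have h2 : (1:ℕ) ≤ q ^ n := Nat.one_le_pow _ _ (by omega)
    zify [h1, h2]
    rw [hE]
    push_cast
    linarith [h]
  -- characteristic
  obtain ⟨p, hp⟩ := CharP.exists K
  haveI : CharP K p := hp
  haveI hpprime : Fact p.Prime := ⟨CharP.char_is_prime K p⟩
  haveI : CharP L p := charP_of_injective_algebraMap hKL p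
  obtain ⟨m, -, hqm⟩ := FiniteField.card K p
  -- Frobenius as an AlgEquiv
  let φ : L →ₐ[K] L :=
    { toFun := fun x => x ^ q
      map_one' := one_pow q
      map_mul' := fun x y => mul_pow x y q
      map_zero' := zero_pow (by omega)
      map_add' := fun x y => by
        show (x + y) ^ q = x ^ q + y ^ q
        have hqm2 : q = p ^ (m : ℕ) := hqm
        rw [hqm2]
        exact add_pow_char_pow x y p (m : ℕ)
      commutes' := fun r => by
        show algebraMap K L r ^ q = algebraMap K L r
        rw [← map_pow, FiniteField.pow_card] }
  have hφbij : Function.Bijective φ :=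
    Finite.injective_iff_bijective.mp φ.toRingHom.injective
  let σ : L ≃ₐ[K] L := AlgEquiv.ofBijective φ hφbij
  have hσ : ∀ x : L, σ x = x ^ q := fun x => rfl
  have hσpow : ∀ (i : ℕ) (x : L), (σ ^ i) x = x ^ q ^ i := by
    intro i
    induction i with
    | zero => intro x; simp
    | succ i ih =>
      intro x
      rw [pow_succ', AlgEquiv.mul_apply, hσ, ih, ← pow_mul, pow_succ', mul_comm]
  -- cyclic generator
  obtain ⟨g, hg⟩ := IsCyclic.exists_generator (α := Lˣ)
  have hgord : orderOf g = q ^ n - 1 := by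
    rw [orderOf_eq_card_of_forall_mem_zpowers hg, Nat.card_units, Nat.card_eq_fintype_card, hcardL]
  -- norm formula
  have hnorm : ∀ x : L, algebraMap K L (Algebra.norm K x) = x ^ E := by
    intro x
    rw [Algebra.norm_eq_prod_automorphisms]
    have hinj : Function.Injective (fun i : Fin n => σ ^ (i : ℕ)) := by
      intro i j hij
      have h1 : (g : L) ^ q ^ (i : ℕ) = (g : L) ^ q ^ (j : ℕ) := by
        have := congrArg (fun τ : L ≃ₐ[K] L => τ (g : L)) hij
        simpa [hσpow] using this
      have h2 : g ^ q ^ (i : ℕ) = g ^ q ^ (j : ℕ) := by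
        ext
        simpa [Units.val_pow_eq_pow_val] using h1
      have h3 : q ^ (i : ℕ) ≡ q ^ (j : ℕ) [MOD q ^ n - 1] := by
        rw [← hgord]
        exact pow_eq_pow_iff_modEq.mp h2
      rcases Nat.lt_or_ge n 2 with hsmall | hbig
      · have hi := i.isLt
        have hj := j.isLt
        exact Fin.ext (by omega)
      · have hlt : ∀ k : ℕ, k < n → q ^ k < q ^ n - 1 := by
          intro k hk
          have h4 : q ^ k ≤ q ^ (n - 1) := Nat.pow_le_pow_right (by omega) (by omega)
          have h5 : q ^ (n - 1) * 2 ≤ q ^ n := by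
            calc q ^ (n - 1) * 2 ≤ q ^ (n - 1) * q := Nat.mul_le_mul_left _ hq2
            _ = q ^ n := by rw [← pow_succ]; congr 1; omega
          have h6 : 2 ≤ q ^ (n - 1) := by
            calc 2 ≤ q := hq2
            _ = q ^ 1 := (pow_one q).symm
            _ ≤ q ^ (n - 1) := Nat.pow_le_pow_right (by omega) (by omega)
          omega
        have h7 : q ^ (i : ℕ) = q ^ (j : ℕ) :=
          h3.eq_of_lt_of_lt (hlt _ i.isLt) (hlt _ j.isLt)
        exact Fin.ext (Nat.pow_right_injective hq2 h7)
    have hbij : Function.Bijective (fun i : Fin n => σ ^ (i : ℕ)) := by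
      rw [Fintype.bijective_iff_injective_and_card]
      refine ⟨hinj, ?_⟩
      rw [Fintype.card_fin]
      rw [← Nat.card_eq_fintype_card]
      exact (IsGalois.card_aut_eq_finrank K L).symm
    rw [← Fintype.prod_bijective _ hbij (fun i : Fin n => (σ ^ (i : ℕ)) x)
      (fun τ : L ≃ₐ[K] L => τ x) (fun i => rfl)]
    simp only [hσpow]
    rw [Finset.prod_pow_eq_pow_sum]
    congr 1
    rw [hE]
    exact Fin.sum_univ_eq_sum_range _ n
  -- the target value in L
  set A := algebraMap K L a with hA
  have hA0 : A ≠ 0 := fun h => ha (hKL (by rwa [map_zero]))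
  have haq : a ^ (q - 1) = 1 := by
    have h := FiniteField.pow_card a
    have h2 : a ^ (q - 1) * a = a := by
      rw [← pow_succ]
      have : q - 1 + 1 = q := by omega
      rw [this, h]
    field_simp at h2
    exact h2
  have hA1 : A ^ (q - 1) = 1 := by rw [hA, ← map_pow, haq, map_one]
  -- a solution x0 with x0 ^ E = A
  obtain ⟨t, ht⟩ : ∃ t : ℕ, g ^ t = Units.mk0 A hA0 := by
    have := hg (Units.mk0 A hA0)
    rwa [← mem_powers_iff_mem_zpowers, Submonoid.mem_powers_iff] at this
  have hAu1 : (Units.mk0 A hA0) ^ (q - 1) = 1 := by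
    ext; simpa [Units.val_pow_eq_pow_val] using hA1
  have hdvd : E ∣ t := by
    have h1 : g ^ (t * (q - 1)) = 1 := by rw [pow_mul, ht, hAu1]
    have h2 : q ^ n - 1 ∣ t * (q - 1) := hgord ▸ orderOf_dvd_of_pow_eq_one h1
    rw [← hEq] at h2
    exact (Nat.mul_dvd_mul_iff_right (by omega : 0 < q - 1)).mp h2
  obtain ⟨u, hu⟩ := hdvd
  have hx0 : (((g ^ u : Lˣ) : L)) ^ E = A := by
    have h1 : (g ^ u) ^ E = Units.mk0 A hA0 := by
      rw [← pow_mul, mul_comm, ← hu, ht]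
    have h2 := congrArg Units.val h1
    simpa [Units.val_pow_eq_pow_val] using h2
  set x0 : L := ((g ^ u : Lˣ) : L) with hx0def
  have hx0ne : x0 ≠ 0 := Units.ne_zero _
  -- primitive E-th root of unity
  have hζ : IsPrimitiveRoot ((g ^ (q - 1) : Lˣ) : L) E := by
    rw [IsPrimitiveRoot.coe_units_iff]
    have hord : orderOf (g ^ (q - 1)) = E := by
      rw [orderOf_pow, hgord, ← hEq,
        Nat.gcd_eq_right ⟨E, by ring⟩, Nat.mul_div_cancel _ (by omega : 0 < q - 1)]
    exact hord ▸ IsPrimitiveRoot.orderOf _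
  -- the fiber has at least E elements
  set S : Finset L := Finset.univ.filter (fun x => x ^ E = A) with hS
  have hScard : E ≤ S.card := by
    have := hζ.card_nthRootsFinset
    rw [← this]
    apply Finset.card_le_card_of_injOn (fun y => x0 * y)
    · intro y hy
      rw [Finset.mem_coe, Polynomial.mem_nthRootsFinset (by omega : 0 < E)] at hy
      simp only [hS, Finset.coe_filter, Finset.mem_coe, Finset.mem_filter, Finset.mem_univ, true_and, Set.mem_setOf_eq]
      rw [mul_pow, hx0, hy, mul_one]
    · intro y _ z _ h
      exact mul_left_cancel₀ hx0ne h
  -- the bad set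
  set T : Finset L :=
    (Finset.Ico 1 n).biUnion (fun d => Finset.univ.filter fun x => x ^ q ^ d = x) with hT
  have hTcard : T.card ≤ E - 1 := by
    have hb : ∀ d ∈ Finset.Ico 1 n,
        (Finset.univ.filter fun x : L => x ^ q ^ d = x).card ≤ q ^ d := by
      intro d hd
      rw [Finset.mem_Ico] at hd
      have hN : 2 ≤ q ^ d := by
        calc 2 ≤ q := hq2
        _ = q ^ 1 := (pow_one q).symm
        _ ≤ q ^ d := Nat.pow_le_pow_right (by omega) hd.1
      have hdeg : (X ^ q ^ d - X : L[X]).natDegree = q ^ d := by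
        rw [natDegree_sub_eq_left_of_natDegree_lt]
        · simp [natDegree_X_pow]
        · simp only [natDegree_X_pow, natDegree_X]
          omega
      have hfne : (X ^ q ^ d - X : L[X]) ≠ 0 := fun h => by
        rw [h, natDegree_zero] at hdeg; omega
      calc (Finset.univ.filter fun x : L => x ^ q ^ d = x).card
          ≤ (X ^ q ^ d - X : L[X]).roots.toFinset.card := by
            apply Finset.card_le_card
            intro x hx
            rw [Finset.mem_filter] at hx
            rw [Multiset.mem_toFinset, Polynomial.mem_roots hfne]
            simp [Polynomial.IsRoot, sub_eq_zero, hx.2]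
      _ ≤ Multiset.card (X ^ q ^ d - X : L[X]).roots := Multiset.toFinset_card_le _
      _ ≤ (X ^ q ^ d - X : L[X]).natDegree := (X ^ q ^ d - X : L[X]).card_roots'
      _ = q ^ d := hdeg
    calc T.card ≤ ∑ d ∈ Finset.Ico 1 n, (Finset.univ.filter
          fun x : L => x ^ q ^ d = x).card := Finset.card_biUnion_le
    _ ≤ ∑ d ∈ Finset.Ico 1 n, q ^ d := Finset.sum_le_sum hb
    _ = E - 1 := by
        rw [hE, Finset.range_eq_Ico, Finset.sum_eq_sum_Ico_succ_bot (by omega : 0 < n)]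
        simp
  -- pick b
  have hnsub : ¬ S ⊆ T := fun h => by
    have := Finset.card_le_card h
    omega
  obtain ⟨b, hbS, hbT⟩ := Finset.not_subset.mp hnsub
  rw [hS, Finset.mem_filter] at hbS
  have hbE : b ^ E = A := hbS.2
  refine ⟨b, ?_, ?_⟩
  · -- b generates L over K
    by_contra hne
    set F := IntermediateField.adjoin K {b} with hF
    have hbF : b ∈ F := IntermediateField.mem_adjoin_simple_self K b
    haveI : Fintype F := Fintype.ofFinite F
    set d := Module.finrank K F with hd
    have hcardF : Fintype.card F = q ^ d := Module.card_eq_pow_finrank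
    have hd1 : 1 ≤ d := Module.finrank_pos
    have hdn : d < n := by
      obtain ⟨x, hx⟩ : ∃ x : L, x ∉ F := by
        by_contra h
        push_neg at h
        exact hne (eq_top_iff.mpr fun y _ => h y)
      have hcardlt : Fintype.card F < Fintype.card L := by
        apply Fintype.card_lt_of_injective_of_notMem (Subtype.val) Subtype.val_injective
          (b := x)
        rintro ⟨⟨y, hy⟩, rfl⟩
        exact hx hy
      rw [hcardF, hcardL] at hcardlt
      exact (Nat.pow_lt_pow_iff_right (by omega)).mp hcardlt
    have hpow : b ^ q ^ d = b := by
      have h := FiniteField.pow_card (⟨b, hbF⟩ : F)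
      rw [hcardF] at h
      have := congrArg (fun x : F => (x : L)) h
      simpa using this
    exact hbT (Finset.mem_biUnion.mpr ⟨d, Finset.mem_Ico.mpr ⟨hd1, hdn⟩,
      Finset.mem_filter.mpr ⟨Finset.mem_univ _, hpow⟩⟩)
  · -- the norm is a
    apply hKL
    rw [hnorm b, hbE]
end
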